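/- Consider the 4-dimensional space H of skew-symmetric 6×6 complex matrices of the form M(a,b,c,d) with rows/columns indexed 1..6: M has block form [[0, B],[−Bᵀ, 0]] where B = [[d,a,b],[−a,d,c],[−b,−c,d]]. Then the Pfaffian of M(a,b,c,d) equals (up to a nonzero constant) d(a²+b²+c²+d²); in particular the locus of rank-≤4 matrices in ℙH is the union of a plane {d=0} and a smooth quadric {a²+b²+c²+d²=0}. -/

import Mathlib

open ExteriorAlgebra

set_option maxRecDepth 100000
noncomputable section

abbrev V6 := Fin 6 → ℂ

/-- standard basis vectors of ℂ⁶ -/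
def e (i : Fin 6) : V6 := Pi.single i 1

/-- image of basis vectors in the exterior algebra -/
def ev (i : Fin 6) : ExteriorAlgebra ℂ V6 := ExteriorAlgebra.ι ℂ (e i)

/-- the volume element e₀∧e₁∧e₂∧e₃∧e₄∧e₅ -/
def vol : ExteriorAlgebra ℂ V6 := ev 0 * ev 1 * ev 2 * ev 3 * ev 4 * ev 5


/-- The 2-form of the skew matrix M(a,b,c,d) = [[0,B],[−Bᵀ,0]] with
B = [[d,a,b],[−a,d,c],[−b,−c,d]] (basis e₀,…,e₅). -/
def ωM (a b c d : ℂ) : ExteriorAlgebra ℂ V6 :=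
  d • (ev 0 * ev 3) + a • (ev 0 * ev 4) + b • (ev 0 * ev 5)
  - a • (ev 1 * ev 3) + d • (ev 1 * ev 4) + c • (ev 1 * ev 5)
  - b • (ev 2 * ev 3) - c • (ev 2 * ev 4) + d • (ev 2 * ev 5)

lemma ev_sq (i : Fin 6) : ev i * ev i = 0 := ι_sq_zero _
lemma ev_sq' (i : Fin 6) (x : ExteriorAlgebra ℂ V6) : ev i * (ev i * x) = 0 := by
  rw [← mul_assoc, ev_sq, zero_mul]
lemma ev_swap {i j : Fin 6} (h : j < i) : ev i * ev j = -(ev j * ev i) := by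
  exact eq_neg_of_add_eq_zero_left (ι_add_mul_swap _ _)
lemma ev_swap' {i j : Fin 6} (h : j < i) (x : ExteriorAlgebra ℂ V6) :
    ev i * (ev j * x) = -(ev j * (ev i * x)) := by
  rw [← mul_assoc, ev_swap h, neg_mul, mul_assoc]

lemma vol_eq : vol = ιMulti ℂ 6 (fun i => e i) := by
  rw [ιMulti_apply]
  simp [vol, ev, List.ofFn_succ, mul_assoc]

lemma vol_ne : vol ≠ 0 := by
  intro h
  have := congrArg (liftAlternating (R := ℂ) (M := V6) (N := ℂ)
    (fun i => match i with
      | 6 => Matrix.detRowAlternating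
      | _ => 0)) (vol_eq.symm.trans h)
  rw [liftAlternating_apply_ιMulti, map_zero] at this
  have this2 : Matrix.detRowAlternating (fun i => e i) = (0:ℂ) := this
  have he : (fun i => e i) = (1 : Matrix (Fin 6) (Fin 6) ℂ) := by
    ext i j
    simp [e, Pi.single_apply, Matrix.one_apply, eq_comm]
  rw [he] at this2
  rw [show Matrix.detRowAlternating (1 : Matrix (Fin 6) (Fin 6) ℂ) = Matrix.det 1 from rfl] at this2
  rw [Matrix.det_one] at this2
  exact one_ne_zero this2


set_option maxHeartbeats 2000000 in
lemma key (a b c d : ℂ) :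
    ωM a b c d * ωM a b c d * ωM a b c d
      = (((-6) : ℂ) * (d * (a^2 + b^2 + c^2 + d^2))) • vol := by
  simp only [ωM, vol]
  simp only [add_mul, mul_add, sub_mul, mul_sub, smul_mul_assoc, mul_smul_comm, mul_assoc,
    smul_smul, smul_neg, neg_smul, smul_add, smul_sub, sub_eq_add_neg, neg_add, neg_neg,
    neg_mul, mul_neg]
  simp (config := { decide := true }) only [ev_swap', ev_sq', ev_sq, ev_swap,
    mul_smul_comm, smul_smul, mul_neg, mul_zero, smul_zero, neg_zero, smul_neg, neg_neg,
    add_zero, zero_add]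
  module


/-- The Pfaffian of M(a,b,c,d) equals, up to a fixed nonzero constant,
d(a²+b²+c²+d²); in particular M(a,b,c,d) has rank ≤ 4 (i.e. ω³ = 0) exactly when
d = 0 or a²+b²+c²+d² = 0, so the rank ≤ 4 locus in ℙH is the union of the plane
{d = 0} and the smooth quadric {a²+b²+c²+d² = 0}. -/
theorem type_two_pfaffian :
    (∃ k : ℂ, k ≠ 0 ∧ ∀ a b c d : ℂ,
      ωM a b c d * ωM a b c d * ωM a b c d
        = (k * (d * (a^2 + b^2 + c^2 + d^2))) • vol) ∧
    (∀ a b c d : ℂ,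
      ωM a b c d * ωM a b c d * ωM a b c d = 0 ↔
        d = 0 ∨ a^2 + b^2 + c^2 + d^2 = 0) := by
  refine ⟨⟨-6, by norm_num, key⟩, fun a b c d => ?_⟩
  rw [key, smul_eq_zero, or_iff_left vol_ne, mul_eq_zero, mul_eq_zero]
  norm_num
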